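/- Let n be a natural number and let μ be a probability measure on (Fin n → ℝ) that is a product of n probability measures on ℝ. If A and B are both measurable upper sets for the coordinatewise partial order (or both measurable lower sets), then μ(A ∩ B) ≥ μ(A)·μ(B). -/

import Mathlib

open MeasureTheory ENNReal

lemma rearr {a a' b b' : ℝ≥0∞} (ha : a ≤ a') (hb : b ≤ b') :
    a * b' + a' * b ≤ a * b + a' * b' := by
  obtain ⟨c, rfl⟩ := exists_add_of_le hb
  rw [mul_add, mul_add]
  calc a * b + a * c + a' * b ≤ a * b + a' * c + a' * b := by gcongr
    _ = a * b + (a' * b + a' * c) := by ring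

lemma cheb (μ : Measure ℝ) [IsProbabilityMeasure μ] (f g : ℝ → ℝ≥0∞)
    (hf : Measurable f) (hg : Measurable g)
    (hre : ∀ x y, f x * g y + f y * g x ≤ f x * g x + f y * g y) :
    (∫⁻ x, f x ∂μ) * ∫⁻ x, g x ∂μ ≤ ∫⁻ x, f x * g x ∂μ := by
  have key : ∫⁻ x, ∫⁻ y, (f x * g y + f y * g x) ∂μ ∂μ ≤
      ∫⁻ x, ∫⁻ y, (f x * g x + f y * g y) ∂μ ∂μ :=
    lintegral_mono fun x => lintegral_mono fun y => hre x y
  have hL : ∫⁻ x, ∫⁻ y, (f x * g y + f y * g x) ∂μ ∂μ =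
      2 * ((∫⁻ x, f x ∂μ) * ∫⁻ x, g x ∂μ) := by
    have : ∀ x, ∫⁻ y, (f x * g y + f y * g x) ∂μ =
        f x * ∫⁻ y, g y ∂μ + (∫⁻ y, f y ∂μ) * g x := by
      intro x
      rw [lintegral_add_left (hg.const_mul _), lintegral_const_mul _ hg,
        lintegral_mul_const _ hf]
    simp_rw [this]
    rw [lintegral_add_left (hf.mul_const _), lintegral_mul_const _ hf,
      lintegral_const_mul _ hg, two_mul]
  have hR : ∫⁻ x, ∫⁻ y, (f x * g x + f y * g y) ∂μ ∂μ = 2 * ∫⁻ x, f x * g x ∂μ := by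
    have : ∀ x, ∫⁻ y, (f x * g x + f y * g y) ∂μ = f x * g x + ∫⁻ y, f y * g y ∂μ := by
      intro x
      rw [lintegral_add_right (g := fun y => f y * g y) _ (hf.mul hg), lintegral_const, measure_univ, mul_one]
    simp_rw [this]
    rw [lintegral_add_left (f := fun y => f y * g y) (hf.mul hg), lintegral_const, measure_univ, mul_one, two_mul]
  rw [hL, hR] at key
  exact (ENNReal.mul_le_mul_iff_right two_ne_zero ofNat_ne_top).mp key

lemma fkg_aux : ∀ (n : ℕ) (μi : Fin n → Measure ℝ),
    (∀ i, IsProbabilityMeasure (μi i)) →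
    ∀ A B : Set (Fin n → ℝ), MeasurableSet A → MeasurableSet B →
    ((IsUpperSet A ∧ IsUpperSet B) ∨ (IsLowerSet A ∧ IsLowerSet B)) →
    Measure.pi μi A * Measure.pi μi B ≤ Measure.pi μi (A ∩ B) := by
  intro n
  induction n with
  | zero =>
    intro μi hprob A B hA hB _
    haveI := hprob
    haveI : IsProbabilityMeasure (Measure.pi μi) := by infer_instance
    rcases A.eq_empty_or_nonempty with rfl | ⟨a, ha⟩
    · simp
    have hAu : A = Set.univ := Set.eq_univ_of_forall fun y => by
      rwa [Subsingleton.elim y a]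
    rcases B.eq_empty_or_nonempty with rfl | ⟨b, hb⟩
    · simp
    have hBu : B = Set.univ := Set.eq_univ_of_forall fun y => by
      rwa [Subsingleton.elim y b]
    simp [hAu, hBu]
  | succ n ih =>
    intro μi hprob A B hA hB hmono
    haveI := hprob
    set e := MeasurableEquiv.piFinSuccAbove (fun _ : Fin (n + 1) => ℝ) 0 with he
    set ν := Measure.pi fun j => μi ((0 : Fin (n + 1)).succAbove j) with hν
    have hmp : MeasurePreserving e (Measure.pi μi) ((μi 0).prod ν) :=
      measurePreserving_piFinSuccAbove μi 0
    -- e.symm is monotone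
    have hesm : Monotone fun p : ℝ × (Fin n → ℝ) => (e.symm p : Fin (n + 1) → ℝ) := by
      intro p q hpq
      intro i
      simp only [he, MeasurableEquiv.piFinSuccAbove_symm_apply, Fin.insertNthEquiv_apply]
      induction i using Fin.cases with
      | zero => simpa using hpq.1
      | succ j =>
        rw [← Fin.zero_succAbove j, Fin.insertNth_apply_succAbove,
          Fin.insertNth_apply_succAbove]
        exact hpq.2 j
    set A' := e.symm ⁻¹' A with hA'def
    set B' := e.symm ⁻¹' B with hB'def
    have hA' : MeasurableSet A' := hA.preimage e.symm.measurable
    have hB' : MeasurableSet B' := hB.preimage e.symm.measurable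
    have hmeas : ∀ S : Set (Fin (n + 1) → ℝ), MeasurableSet S →
        Measure.pi μi S = ((μi 0).prod ν) (e.symm ⁻¹' S) := by
      intro S hS
      have : e ⁻¹' (e.symm ⁻¹' S) = S := by
        ext x; simp
      rw [← this]
      exact hmp.measure_preimage ((hS.preimage e.symm.measurable).nullMeasurableSet)
    set f := fun x => ν (Prod.mk x ⁻¹' A') with hf_def
    set g := fun x => ν (Prod.mk x ⁻¹' B') with hg_def
    have hf : Measurable f := measurable_measure_prodMk_left hA'
    have hg : Measurable g := measurable_measure_prodMk_left hB'
    -- monotonicity of sections / of f, g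
    have sec_mono : ∀ {S : Set (ℝ × (Fin n → ℝ))}, IsUpperSet S →
        ∀ {x x' : ℝ}, x ≤ x' → Prod.mk x ⁻¹' S ⊆ Prod.mk x' ⁻¹' S := by
      intro S hS x x' hxx y hy
      exact hS (Prod.mk_le_mk.mpr ⟨hxx, le_rfl⟩) hy
    have sec_anti : ∀ {S : Set (ℝ × (Fin n → ℝ))}, IsLowerSet S →
        ∀ {x x' : ℝ}, x ≤ x' → Prod.mk x' ⁻¹' S ⊆ Prod.mk x ⁻¹' S := by
      intro S hS x x' hxx y hy
      exact hS (Prod.mk_le_mk.mpr ⟨hxx, le_rfl⟩) hy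
    have sec_upper : ∀ {S : Set (ℝ × (Fin n → ℝ))}, IsUpperSet S →
        ∀ x : ℝ, IsUpperSet (Prod.mk x ⁻¹' S) := by
      intro S hS x y y' hyy hy
      exact hS (Prod.mk_le_mk.mpr ⟨le_rfl, hyy⟩) hy
    have sec_lower : ∀ {S : Set (ℝ × (Fin n → ℝ))}, IsLowerSet S →
        ∀ x : ℝ, IsLowerSet (Prod.mk x ⁻¹' S) := by
      intro S hS x y y' hyy hy
      exact hS (Prod.mk_le_mk.mpr ⟨le_rfl, hyy⟩) hy
    -- rearrangement hypothesis and pointwise IH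
    have hsec_mono : (IsUpperSet A' ∧ IsUpperSet B') ∨ (IsLowerSet A' ∧ IsLowerSet B') := by
      rcases hmono with ⟨hAu, hBu⟩ | ⟨hAl, hBl⟩
      · exact Or.inl ⟨hAu.preimage hesm, hBu.preimage hesm⟩
      · exact Or.inr ⟨hAl.preimage hesm, hBl.preimage hesm⟩
    have hre : ∀ x y, f x * g y + f y * g x ≤ f x * g x + f y * g y := by
      have hmonov : (Monotone f ∧ Monotone g) ∨ (Antitone f ∧ Antitone g) := by
        rcases hsec_mono with ⟨hAu, hBu⟩ | ⟨hAl, hBl⟩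
        · exact Or.inl ⟨fun x x' h => measure_mono (sec_mono hAu h),
            fun x x' h => measure_mono (sec_mono hBu h)⟩
        · exact Or.inr ⟨fun x x' h => measure_mono (sec_anti hAl h),
            fun x x' h => measure_mono (sec_anti hBl h)⟩
      intro x y
      rcases hmonov with ⟨hfm, hgm⟩ | ⟨hfm, hgm⟩
      · rcases le_total x y with h | h
        · exact rearr (hfm h) (hgm h)
        · rw [add_comm, add_comm (f x * g x)]
          exact rearr (hfm h) (hgm h)
      · rcases le_total y x with h | h
        · exact rearr (hfm h) (hgm h)
        · rw [add_comm, add_comm (f x * g x)]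
          exact rearr (hfm h) (hgm h)
    have hIH : ∀ x : ℝ, f x * g x ≤ ν (Prod.mk x ⁻¹' (A' ∩ B')) := by
      intro x
      rw [Set.preimage_inter]
      refine ih _ (fun j => inferInstance) _ _
        (hA'.preimage measurable_prodMk_left) (hB'.preimage measurable_prodMk_left) ?_
      rcases hsec_mono with ⟨hAu, hBu⟩ | ⟨hAl, hBl⟩
      · exact Or.inl ⟨sec_upper hAu x, sec_upper hBu x⟩
      · exact Or.inr ⟨sec_lower hAl x, sec_lower hBl x⟩
    calc Measure.pi μi A * Measure.pi μi B
        = (∫⁻ x, f x ∂μi 0) * ∫⁻ x, g x ∂μi 0 := by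
          rw [hmeas A hA, hmeas B hB, Measure.prod_apply hA', Measure.prod_apply hB']
      _ ≤ ∫⁻ x, f x * g x ∂μi 0 := cheb (μi 0) f g hf hg hre
      _ ≤ ∫⁻ x, ν (Prod.mk x ⁻¹' (A' ∩ B')) ∂μi 0 := lintegral_mono hIH
      _ = Measure.pi μi (A ∩ B) := by
          rw [hmeas (A ∩ B) (hA.inter hB), Set.preimage_inter,
            Measure.prod_apply (hA'.inter hB')]

theorem fkg_inequality_events (n : ℕ) (μi : Fin n → Measure ℝ)
    [∀ i, IsProbabilityMeasure (μi i)]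
    (A B : Set (Fin n → ℝ))
    (hA : MeasurableSet A) (hB : MeasurableSet B)
    (hmono : (IsUpperSet A ∧ IsUpperSet B) ∨ (IsLowerSet A ∧ IsLowerSet B)) :
    Measure.pi μi (A ∩ B) ≥ Measure.pi μi A * Measure.pi μi B :=
  fkg_aux n μi inferInstance A B hA hB hmono
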